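/- Let φ be a monotone E3CNF formula and Δ ⊆ I_φ a set of tuples such that I_φ ∖ Δ is consistent with respect to Σ_{AB→C→B} = {AB → C, C → B}. Then for every clause c_i of φ, Δ contains at least two of the three tuples of I_φ whose value on attribute A is c_i. -/
import Mathlib


/-- A functional dependency `X → Y` is a pair of attribute sets; two tuples form a
`φ`-conflict if they agree on every attribute of `X` but differ on some attribute of `Y`. -/
def IsPhiConflict {α V : Type*} (X Y : Finset α) (s t : α → V) : Prop :=
  (∀ a ∈ X, s a = t a) ∧ (∃ a ∈ Y, s a ≠ t a)

instance {α V : Type*} [DecidableEq V] (X Y : Finset α) (s t : α → V) :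
    Decidable (IsPhiConflict X Y s t) := by
  unfold IsPhiConflict; infer_instance

/-- Two tuples form a conflict w.r.t. a finite FD set if they form a `φ`-conflict
for some FD `φ` of the set. -/
def IsConflict {α V : Type*} (FDs : Finset (Finset α × Finset α)) (s t : α → V) : Prop :=
  ∃ fd ∈ FDs, IsPhiConflict fd.1 fd.2 s t

instance {α V : Type*} [DecidableEq V] (FDs : Finset (Finset α × Finset α)) (s t : α → V) :
    Decidable (IsConflict FDs s t) := by
  unfold IsConflict; infer_instance

/-- A set of tuples is consistent w.r.t. an FD set if no two of its tuples form a conflict. -/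
def Consistent {α V : Type*} (FDs : Finset (Finset α × Finset α)) (J : Finset (α → V)) : Prop :=
  ∀ s ∈ J, ∀ t ∈ J, ¬ IsConflict FDs s t

/-- `opt FDs I` is the minimum of `dist(J,I) = |I| - |J|` over all consistent subsets `J ⊆ I`. -/
noncomputable def opt {α V : Type*} (FDs : Finset (Finset α × Finset α))
    (I : Finset (α → V)) : ℕ :=
  sInf {d : ℕ | ∃ J ⊆ I, Consistent FDs J ∧ d = I.card - J.card}

/-- A monotone E3CNF formula with `n` variables and `m` clauses: each clause has exactly
three literals over pairwise distinct variables and is monotone, i.e. all its literals have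
the same polarity `pol i` (`true` = all positive, `false` = all negative). -/
structure MonotoneE3CNF (n m : ℕ) where
  lit : Fin m → Fin 3 → Fin n
  pol : Fin m → Bool
  distinct : ∀ i, Function.Injective (lit i)

/-- The number of clauses satisfied by assignment `τ`. -/
def MonotoneE3CNF.numSat {n m : ℕ} (φ : MonotoneE3CNF n m) (τ : Fin n → Bool) : ℕ :=
  (Finset.univ.filter fun i : Fin m => ∃ k, τ (φ.lit i k) = φ.pol i).card

/-- `#τ_max(φ)`: the maximum number of simultaneously satisfiable clauses. -/
def MonotoneE3CNF.maxSat {n m : ℕ} (φ : MonotoneE3CNF n m) : ℕ :=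
  Finset.univ.sup fun τ : Fin n → Bool => φ.numSat τ

/-- Values used in the instance `I_φ`: clause constants `c_i`, variable constants `x_j`,
and the two Boolean values; all pairwise distinct. -/
abbrev Val2 (n m : ℕ) := Sum (Fin m) (Sum (Fin n) Bool)

/-- The two tuples `(x_j, 1, x_j)` and `(x_j, 0, x_j)` built for variable `x_j`. -/
def varTuple {n m : ℕ} (j : Fin n) (b : Bool) : Fin 3 → Val2 n m :=
  ![Sum.inr (Sum.inl j), Sum.inr (Sum.inr b), Sum.inr (Sum.inl j)]

/-- The tuple built for the `k`-th literal of clause `i`: `(c_i, 1, x_j)` if the variable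
`j = lit i k` occurs positively in clause `i`, `(c_i, 0, x_j)` if it occurs negatively. -/
def clauseTuple {n m : ℕ} (φ : MonotoneE3CNF n m) (i : Fin m) (k : Fin 3) : Fin 3 → Val2 n m :=
  ![Sum.inl i, Sum.inr (Sum.inr (φ.pol i)), Sum.inr (Sum.inl (φ.lit i k))]

/-- The instance `I_φ` over attributes `A = 0`, `B = 1`, `C = 2`. -/
def Iphi2 {n m : ℕ} (φ : MonotoneE3CNF n m) : Finset (Fin 3 → Val2 n m) :=
  (Finset.univ.image fun p : Fin n × Bool => varTuple p.1 p.2) ∪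
    (Finset.univ.image fun p : Fin m × Fin 3 => clauseTuple φ p.1 p.2)

/-- The FD set `Σ_{AB→C→B} = {AB → C, C → B}`. -/
def Sigma2 : Finset (Finset (Fin 3) × Finset (Fin 3)) := {({0, 1}, {2}), ({2}, {1})}

/-- If `Δ ⊆ I_φ` and `I_φ ∖ Δ` is consistent w.r.t. `Σ_{AB→C→B} = {AB → C, C → B}`,
then for every clause `c_i`, `Δ` contains at least two of the three tuples of `I_φ`
whose value on attribute `A` is `c_i`. -/
theorem stmt3 {n m : ℕ} (φ : MonotoneE3CNF n m)
    (Δ : Finset (Fin 3 → Val2 n m)) (hΔ : Δ ⊆ Iphi2 φ)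
    (hcons : Consistent Sigma2 (Iphi2 φ \ Δ)) :
    ∀ i : Fin m, 2 ≤ (Δ.filter fun t => t 0 = Sum.inl i).card := by
  intro i
  have hmem : ∀ k : Fin 3, clauseTuple φ i k ∈ Iphi2 φ := fun k =>
    Finset.mem_union_right _ (Finset.mem_image.2 ⟨(i, k), Finset.mem_univ _, rfl⟩)
  have hne : ∀ k k' : Fin 3, k ≠ k' → clauseTuple φ i k ≠ clauseTuple φ i k' := by
    intro k k' hkk' h
    have := congrFun h 2
    simp [clauseTuple] at this
    exact hkk' (φ.distinct i this)
  have key : ∀ k k' : Fin 3, k ≠ k' → clauseTuple φ i k ∉ Δ → clauseTuple φ i k' ∈ Δ := by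
    intro k k' hkk' hk
    by_contra hk'
    apply hcons (clauseTuple φ i k) (Finset.mem_sdiff.2 ⟨hmem k, hk⟩)
      (clauseTuple φ i k') (Finset.mem_sdiff.2 ⟨hmem k', hk'⟩)
    refine ⟨({0, 1}, {2}), by simp [Sigma2], ?_, ⟨2, by simp, ?_⟩⟩
    · intro a ha
      fin_cases ha <;> rfl
    · simp only [clauseTuple]
      simp only [Matrix.cons_val_two, Matrix.tail_cons, Matrix.head_cons]
      intro h
      exact hkk' (φ.distinct i (by injection (by injection h)))
  obtain ⟨k, k', hkk', hkΔ, hk'Δ⟩ :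
      ∃ k k' : Fin 3, k ≠ k' ∧ clauseTuple φ i k ∈ Δ ∧ clauseTuple φ i k' ∈ Δ := by
    by_cases h0 : clauseTuple φ i 0 ∈ Δ
    · by_cases h1 : clauseTuple φ i 1 ∈ Δ
      · exact ⟨0, 1, by decide, h0, h1⟩
      · exact ⟨0, 2, by decide, h0, key 1 2 (by decide) h1⟩
    · exact ⟨1, 2, by decide, key 0 1 (by decide) h0, key 0 2 (by decide) h0⟩
  have hsub : ({clauseTuple φ i k, clauseTuple φ i k'} : Finset _) ⊆
      Δ.filter fun t => t 0 = Sum.inl i := by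
    intro t ht
    simp only [Finset.mem_insert, Finset.mem_singleton] at ht
    rcases ht with rfl | rfl <;> exact Finset.mem_filter.2 ⟨by assumption, rfl⟩
  calc 2 = ({clauseTuple φ i k, clauseTuple φ i k'} : Finset _).card := by
        rw [Finset.card_pair (hne k k' hkk')]
    _ ≤ _ := Finset.card_le_card hsub
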